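/- Let m ∈ ℕ, R, N ∈ ℕ with N ≥ 2, let x_1, …, x_R ∈ ℝ^m, and let (a_n)_{n ∈ ℤ^m} be any m-fold sequence of complex numbers. Then Σ_{i=1}^R |Σ_{n ∈ ℤ^m, ‖n‖₂ ≤ N^{1/m}} a_n · e(n · x_i)|² ≪ F · N · Σ_{n ∈ ℤ^m, ‖n‖₂ ≤ N^{1/m}} |a_n|², where F = max_{1 ≤ i ≤ R} #{j ∈ {1,…,R} : min_{z ∈ ℤ^m} ‖x_j − x_i − z‖₂ ≤ √m / N^{1/m}}. -/

import Mathlib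

open Finset Complex Real

noncomputable def ee (t : ℝ) : ℂ := Complex.exp (2 * (Real.pi : ℂ) * Complex.I * t)

lemma ee_add (s t : ℝ) : ee (s + t) = ee s * ee t := by
  simp only [ee, ← Complex.exp_add]; congr 1; push_cast; ring

lemma ee_norm (t : ℝ) : ‖ee t‖ = 1 := by
  rw [ee, show 2 * (Real.pi : ℂ) * Complex.I * t = (2 * Real.pi * t : ℝ) * Complex.I by push_cast; ring]
  exact Complex.norm_exp_ofReal_mul_I _

lemma ee_conj (t : ℝ) : (starRingEnd ℂ) (ee t) = ee (-t) := by
  rw [ee, ee, ← Complex.exp_conj]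
  congr 1
  simp only [map_mul, Complex.conj_I, Complex.conj_ofReal, map_ofNat]
  push_cast; ring

lemma ee_int (k : ℤ) : ee k = 1 := by
  rw [ee, show 2 * (Real.pi : ℂ) * Complex.I * (k : ℝ) = (k : ℤ) * (2 * Real.pi * Complex.I) by push_cast; ring]
  exact Complex.exp_int_mul_two_pi_mul_I k

lemma ee_sub_one_norm (t : ℝ) : ‖ee t - 1‖ = 2 * |Real.sin (Real.pi * t)| := by
  rw [ee, show 2 * (Real.pi : ℂ) * Complex.I * t = (2 * Real.pi * t : ℝ) * Complex.I by push_cast; ring]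
  rw [Complex.exp_mul_I, ← Complex.ofReal_cos, ← Complex.ofReal_sin]
  have h : (Real.cos (2*Real.pi*t) : ℂ) + (Real.sin (2*Real.pi*t) : ℂ) * Complex.I - 1
      = ((Real.cos (2*Real.pi*t) - 1 : ℝ) : ℂ) + ((Real.sin (2*Real.pi*t) : ℝ) : ℂ) * Complex.I := by
    push_cast; ring
  rw [h, Complex.norm_def, Complex.normSq_add_mul_I]
  have hc : Real.cos (2 * Real.pi * t) = 1 - 2 * Real.sin (Real.pi * t) ^ 2 := by
    have h1 := Real.cos_two_mul (Real.pi * t)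
    have h2 := Real.sin_sq_add_cos_sq (Real.pi * t)
    rw [show 2 * Real.pi * t = 2 * (Real.pi * t) by ring]
    linarith
  have hs := Real.sin_sq_add_cos_sq (2 * Real.pi * t)
  rw [show (Real.cos (2*Real.pi*t) - 1)^2 + Real.sin (2*Real.pi*t)^2 = (2 * |Real.sin (Real.pi * t)|)^2 by
    have hsq := _root_.sq_abs (Real.sin (Real.pi * t)); nlinarith]
  exact Real.sqrt_sq (by positivity)

noncomputable def DD (M : ℕ) (t : ℝ) : ℂ := ∑ j ∈ Finset.range M, ee (j * t)

noncomputable def del (t : ℝ) : ℝ := min (Int.fract t) (1 - Int.fract t)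

lemma del_nonneg (t : ℝ) : 0 ≤ del t := by
  have h1 := Int.fract_nonneg t
  have h2 := Int.fract_lt_one t
  exact le_min h1 (by linarith)

lemma abs_sin_ge (t : ℝ) : 2 * del t ≤ |Real.sin (Real.pi * t)| := by
  have hu1 := Int.fract_nonneg t
  have hu2 := Int.fract_lt_one t
  set u := Int.fract t with hu
  have hsin : |Real.sin (Real.pi * t)| = |Real.sin (Real.pi * u)| := by
    have ht : t = u + (⌊t⌋ : ℝ) := by rw [hu]; linarith [Int.floor_add_fract t]
    rw [ht, show Real.pi * (u + (⌊t⌋:ℝ)) = Real.pi * u + (⌊t⌋:ℝ) * Real.pi by ring]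
    rw [Real.sin_add, Real.sin_int_mul_pi]
    have hcos : |Real.cos ((⌊t⌋:ℝ) * Real.pi)| = 1 := by
      have h1 := Real.sin_sq_add_cos_sq ((⌊t⌋:ℝ) * Real.pi)
      have h2 := Real.sin_int_mul_pi (⌊t⌋)
      have h3 := _root_.sq_abs (Real.cos ((⌊t⌋:ℝ) * Real.pi))
      nlinarith [abs_nonneg (Real.cos ((⌊t⌋:ℝ) * Real.pi))]
    rw [mul_zero, add_zero, abs_mul, hcos, mul_one]
  rw [hsin]
  have hpi := Real.pi_pos
  rcases le_or_gt u (1/2) with h | h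
  · have := Real.mul_le_sin (x := Real.pi * u) (by positivity) (by nlinarith)
    have h2u : 2 / Real.pi * (Real.pi * u) = 2 * u := by field_simp
    have hd : del t ≤ u := min_le_left _ _
    rw [_root_.abs_of_nonneg (by nlinarith [Real.sin_nonneg_of_nonneg_of_le_pi (x := Real.pi * u) (by positivity) (by nlinarith)])]
    nlinarith
  · have h1u : Real.sin (Real.pi * u) = Real.sin (Real.pi * (1 - u)) := by
      rw [show Real.pi * (1 - u) = Real.pi - Real.pi * u by ring, Real.sin_pi_sub]
    have := Real.mul_le_sin (x := Real.pi * (1 - u)) (by nlinarith) (by nlinarith)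
    have h2u : 2 / Real.pi * (Real.pi * (1 - u)) = 2 * (1 - u) := by field_simp
    have hd : del t ≤ 1 - u := min_le_right _ _
    rw [h1u, _root_.abs_of_nonneg (by nlinarith)]
    nlinarith

lemma DD_norm_le (M : ℕ) (t : ℝ) : ‖DD M t‖ ≤ M := by
  calc ‖DD M t‖ ≤ ∑ j ∈ Finset.range M, ‖ee (j * t)‖ := norm_sum_le _ _
  _ = ∑ _j ∈ Finset.range M, (1:ℝ) := Finset.sum_congr rfl (fun j _ => ee_norm _)
  _ = M := by simp

lemma DD_geom (M : ℕ) (t : ℝ) : (ee t - 1) * DD M t = ee (M * t) - 1 := by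
  have h : (ee t - 1) * DD M t
      = ∑ j ∈ Finset.range M, ((fun n : ℕ => ee (n * t)) (j+1) - (fun n : ℕ => ee (n * t)) j) := by
    rw [DD, Finset.mul_sum]
    refine Finset.sum_congr rfl (fun j _ => ?_)
    simp only []
    rw [show (((j+1:ℕ)):ℝ) * t = t + j * t by push_cast; ring, ee_add]; ring
  rw [h, Finset.sum_range_sub (fun n : ℕ => ee (n * t))]
  norm_num
  simpa using ee_int 0

lemma DD_norm_le_del (M : ℕ) {t : ℝ} (h : 0 < del t) : ‖DD M t‖ ≤ 1 / (2 * del t) := by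
  have hsin := abs_sin_ge t
  have hne : ‖ee t - 1‖ ≠ 0 := by
    rw [ee_sub_one_norm]; nlinarith [abs_sin_ge t]
  have hgeom := DD_geom M t
  have h1 : ‖ee t - 1‖ * ‖DD M t‖ = ‖ee (M * t) - 1‖ := by rw [← norm_mul, hgeom]
  have h2 : ‖ee (M * t) - 1‖ ≤ 2 := by
    calc ‖ee (M*t) - 1‖ ≤ ‖ee (M*t)‖ + ‖(1:ℂ)‖ := norm_sub_le _ _
    _ = 2 := by rw [ee_norm]; norm_num
  have h3 : 4 * del t ≤ ‖ee t - 1‖ := by rw [ee_sub_one_norm]; linarith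
  have h4 : 0 < ‖ee t - 1‖ := lt_of_lt_of_le (by linarith) h3
  rw [le_div_iff₀ (by positivity)]
  nlinarith [norm_nonneg (DD M t)]

noncomputable def ww (M : ℕ) (k : ℤ) : ℝ :=
  ((((Finset.range M) ×ˢ (Finset.range M)).filter
    (fun p => (p.1 : ℤ) - (p.2 : ℤ) = k)).card : ℝ) / M

lemma ww_nonneg (M : ℕ) (k : ℤ) : 0 ≤ ww M k :=
  div_nonneg (Nat.cast_nonneg _) (Nat.cast_nonneg _)

lemma ww_ge_half (L : ℕ) (hL : 1 ≤ L) {k : ℤ} (hk : |k| ≤ L) : 1/2 ≤ ww (2*L) k := by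
  set M := 2*L with hM
  have hna : k.natAbs ≤ L := by
    have := Int.abs_eq_natAbs k; omega
  have hinj : (Finset.range (M - k.natAbs)).card ≤
      (((Finset.range M) ×ˢ (Finset.range M)).filter
        (fun p => (p.1 : ℤ) - (p.2 : ℤ) = k)).card := by
    apply Finset.card_le_card_of_injOn (fun j => (j + k.toNat, j + (-k).toNat))
    · intro j hj
      simp only [Finset.mem_coe, Finset.mem_range] at hj
      simp only [Finset.mem_coe, Finset.mem_filter, Finset.mem_product, Finset.mem_range]
      have h1 : k.toNat ≤ k.natAbs := by omega
      have h2 : (-k).toNat ≤ k.natAbs := by omega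
      refine ⟨⟨by omega, by omega⟩, ?_⟩
      push_cast
      omega
    · intro a _ b _ hab
      simp only [Prod.mk.injEq] at hab
      omega
  have hcard : (L : ℝ) ≤
      ((((Finset.range M) ×ˢ (Finset.range M)).filter
        (fun p => (p.1 : ℤ) - (p.2 : ℤ) = k)).card : ℝ) := by
    rw [Finset.card_range] at hinj
    have : L ≤ M - k.natAbs := by omega
    exact_mod_cast le_trans this hinj
  rw [ww]
  rw [le_div_iff₀ (by positivity : (0:ℝ) < ((2*L : ℕ) : ℝ))]
  push_cast at hcard ⊢
  linarith

lemma EE_eq (M : ℕ) (t : ℝ) :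
    ∑ k ∈ Finset.Icc (1-(M:ℤ)) ((M:ℤ)-1), (ww M k : ℂ) * ee (k * t)
      = (1/(M:ℂ)) * (DD M t * (starRingEnd ℂ) (DD M t)) := by
  have hexp : DD M t * (starRingEnd ℂ) (DD M t)
      = ∑ p ∈ (Finset.range M) ×ˢ (Finset.range M), ee ((((p.1 : ℤ) - p.2 : ℤ) : ℝ) * t) := by
    rw [DD, map_sum, Finset.sum_mul_sum, ← Finset.sum_product']
    refine Finset.sum_congr rfl (fun p _ => ?_)
    rw [ee_conj, ← ee_add]
    congr 1
    push_cast
    ring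
  have hfib : ∑ p ∈ (Finset.range M) ×ˢ (Finset.range M), ee ((((p.1 : ℤ) - p.2 : ℤ) : ℝ) * t)
      = ∑ k ∈ Finset.Icc (1-(M:ℤ)) ((M:ℤ)-1),
          ∑ p ∈ ((Finset.range M) ×ˢ (Finset.range M)).filter
            (fun p => (p.1 : ℤ) - (p.2 : ℤ) = k), ee ((((p.1 : ℤ) - p.2 : ℤ) : ℝ) * t) := by
    rw [Finset.sum_fiberwise_of_maps_to]
    intro p hp
    simp only [Finset.mem_product, Finset.mem_range] at hp
    simp only [Finset.mem_Icc]
    omega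
  have hinner : ∀ k ∈ Finset.Icc (1-(M:ℤ)) ((M:ℤ)-1),
      ∑ p ∈ ((Finset.range M) ×ˢ (Finset.range M)).filter
        (fun p => (p.1 : ℤ) - (p.2 : ℤ) = k), ee ((((p.1 : ℤ) - p.2 : ℤ) : ℝ) * t)
      = (((((Finset.range M) ×ˢ (Finset.range M)).filter
          (fun p => (p.1 : ℤ) - (p.2 : ℤ) = k)).card : ℂ)) * ee ((k : ℝ) * t) := by
    intro k _
    rw [Finset.sum_congr rfl (fun p hp => ?_), Finset.sum_const, nsmul_eq_mul]
    have := (Finset.mem_filter.mp hp).2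
    rw [this]
  rw [hexp, hfib, Finset.sum_congr rfl hinner, Finset.mul_sum]
  refine Finset.sum_congr rfl (fun k _ => ?_)
  rw [ww]
  have hMc : ((M:ℝ) : ℂ) = (M : ℂ) := by push_cast; rfl
  push_cast
  ring

noncomputable def EE (M : ℕ) (t : ℝ) : ℂ :=
  ∑ k ∈ Finset.Icc (1-(M:ℤ)) ((M:ℤ)-1), (ww M k : ℂ) * ee (k * t)

lemma EE_norm (M : ℕ) (t : ℝ) : ‖EE M t‖ = ‖DD M t‖^2 / M := by
  rw [EE, EE_eq, norm_mul, norm_mul, RCLike.norm_conj]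
  rw [norm_div, norm_one, Complex.norm_natCast]
  ring

lemma EE_le (M : ℕ) (t : ℝ) : ‖EE M t‖ ≤ M := by
  rcases Nat.eq_zero_or_pos M with h | h
  · subst h
    have he : EE 0 t = 0 := by
      rw [EE, Finset.Icc_eq_empty (by norm_num), Finset.sum_empty]
    rw [he]; simp
  rw [EE_norm, div_le_iff₀ (by positivity)]
  nlinarith [DD_norm_le M t, norm_nonneg (DD M t), (by exact_mod_cast h : (0:ℝ) < M)]

lemma EE_decay (M : ℕ) (hM : 0 < M) {t : ℝ} (h : 0 < del t) :
    ‖EE M t‖ ≤ 1 / (4 * M * del t ^ 2) := by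
  rw [EE_norm]
  have hM' : (0:ℝ) < M := by exact_mod_cast hM
  have h1 := DD_norm_le_del M h
  have h2 : ‖DD M t‖^2 ≤ 1 / (4 * del t ^2) := by
    rw [show (1:ℝ) / (4 * del t ^2) = (1/(2 * del t))^2 by field_simp; ring]
    exact pow_le_pow_left₀ (norm_nonneg _) h1 2
  have h3 : ‖DD M t‖^2 * (4 * del t^2) ≤ 1 := by
    rw [le_div_iff₀ (by positivity)] at h2; linarith
  rw [div_le_div_iff₀ hM' (by positivity)]
  nlinarith

lemma sum_inv_sq (n : ℕ) : ∑ d ∈ Finset.range n, (1:ℝ)/((d+1)^2) ≤ 2 := by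
  have key : ∀ n : ℕ, ∑ d ∈ Finset.range n, (1:ℝ)/(((d:ℝ)+1)^2) ≤ 2 - 1/(n:ℝ) := by
    intro n
    induction n with
    | zero => norm_num
    | succ n ih =>
      rcases Nat.eq_zero_or_pos n with h | h
      · subst h; norm_num
      rw [Finset.sum_range_succ]
      have h1 : (0:ℝ) < (n:ℝ) := by exact_mod_cast h
      have h2 : (0:ℝ) < (n:ℝ) + 1 := by positivity
      have hstep : (1:ℝ)/(((n:ℝ)+1)^2) ≤ 1/(n:ℝ) - 1/((n:ℝ)+1) := by
        rw [div_sub_div _ _ (ne_of_gt h1) (ne_of_gt h2)]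
        rw [div_le_div_iff₀ (by positivity) (by positivity)]
        nlinarith
      push_cast
      push_cast at ih
      linarith
  have := key n
  rcases Nat.eq_zero_or_pos n with h | h
  · subst h; norm_num
  have h1 : (0:ℝ) < (n:ℝ) := by exact_mod_cast h
  have h2 : (0:ℝ) ≤ 1/(n:ℝ) := by positivity
  linarith

noncomputable def gg (M : ℕ) (κ : ℕ) : ℝ := if κ = 0 then (M:ℝ) else M/(4*κ^2)

lemma gg_nonneg (M κ : ℕ) : 0 ≤ gg M κ := by
  unfold gg; split <;> positivity

lemma gg_sum (M : ℕ) (hM : 1 ≤ M) : ∑ κ ∈ Finset.range M, gg M κ ≤ (3/2) * M := by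
  obtain ⟨n, rfl⟩ : ∃ n, M = n + 1 := ⟨M - 1, by omega⟩
  rw [Finset.sum_range_succ']
  have h0 : gg (n+1) 0 = ((n+1 : ℕ):ℝ) := by unfold gg; simp
  have hstep : ∑ i ∈ Finset.range n, gg (n+1) (i+1)
      ≤ ((n+1:ℕ):ℝ)/4 * ∑ d ∈ Finset.range n, (1:ℝ)/(((d:ℝ)+1)^2) := by
    rw [Finset.mul_sum]
    apply Finset.sum_le_sum
    intro i _
    apply le_of_eq
    unfold gg
    simp only [Nat.succ_ne_zero, if_false]
    push_cast
    field_simp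
  have hsq := sum_inv_sq n
  have hN : (0:ℝ) ≤ ((n+1:ℕ):ℝ)/4 := by positivity
  have h2 : ((n+1:ℕ):ℝ)/4 * ∑ d ∈ Finset.range n, (1:ℝ)/(((d:ℝ)+1)^2) ≤ ((n+1:ℕ):ℝ)/4 * 2 :=
    mul_le_mul_of_nonneg_left hsq hN
  push_cast at *
  linarith

lemma cell_bound (M : ℕ) (hM : 1 ≤ M) (t : ℝ) (κ : ℕ) (hκ : κ < M)
    (h1 : (κ:ℝ)/M ≤ Int.fract t) (h2 : Int.fract t < ((κ:ℝ)+1)/M) :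
    ‖EE M t‖ ≤ gg M κ + gg M (M-1-κ) := by
  have hMpos : (0:ℝ) < M := by exact_mod_cast hM
  rcases eq_or_ne κ 0 with h0 | h0
  · subst h0
    have hg : gg M 0 = (M:ℝ) := by unfold gg; simp
    rw [hg]
    have := EE_le M t
    have := gg_nonneg M (M-1-0)
    linarith
  rcases eq_or_ne κ (M-1) with hM1 | hM1
  · have hg : gg M (M-1-κ) = (M:ℝ) := by subst hM1; unfold gg; simp
    rw [hg]
    have := EE_le M t
    have := gg_nonneg M κ
    linarith
  -- interior case
  have hd1 : 1 ≤ κ := by omega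
  have hd2 : κ + 2 ≤ M := by omega
  set d : ℕ := min κ (M-1-κ) with hd
  have hdpos : 1 ≤ d := by omega
  have hcast : ((M-1-κ : ℕ):ℝ) = (M:ℝ) - 1 - (κ:ℝ) := by
    have e1 : M - 1 - κ = M - (κ+1) := by omega
    rw [e1, Nat.cast_sub (by omega)]
    push_cast; ring
  have hfr1 : (d:ℝ)/M ≤ Int.fract t := by
    have hdk : (d:ℝ) ≤ (κ:ℝ) := by exact_mod_cast min_le_left κ (M-1-κ)
    have : (d:ℝ)/M ≤ (κ:ℝ)/M := by gcongr
    linarith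
  have hfr2 : (d:ℝ)/M ≤ 1 - Int.fract t := by
    have hdk : (d:ℝ) ≤ ((M-1-κ:ℕ):ℝ) := by exact_mod_cast min_le_right κ (M-1-κ)
    have hsum : ((κ:ℝ)+1)/M + ((M:ℝ)-1-(κ:ℝ))/M = 1 := by field_simp; ring
    have : (d:ℝ)/M ≤ ((M-1-κ:ℕ):ℝ)/M := by gcongr
    rw [hcast] at this
    linarith
  have hdel : (d:ℝ)/M ≤ del t := le_min hfr1 hfr2
  have hdelpos : 0 < del t := lt_of_lt_of_le (by positivity) hdel
  have hEE := EE_decay M (by omega) hdelpos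
  have hstep : 1/(4 * (M:ℝ) * del t^2) ≤ (M:ℝ)/(4 * (d:ℝ)^2) := by
    rw [div_le_div_iff₀ (by positivity) (by positivity)]
    have h4 : ((d:ℝ)/M)^2 ≤ del t^2 := pow_le_pow_left₀ (by positivity) hdel 2
    rw [div_pow] at h4
    rw [div_le_iff₀ (by positivity)] at h4
    nlinarith
  have hfinal : (M:ℝ)/(4 * (d:ℝ)^2) ≤ gg M κ + gg M (M-1-κ) := by
    rcases le_total κ (M-1-κ) with hc | hc
    · have hdk : d = κ := min_eq_left hc
      have hg : gg M κ = (M:ℝ)/(4*(κ:ℝ)^2) := by unfold gg; simp [h0]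
      rw [hdk, hg]
      have := gg_nonneg M (M-1-κ)
      linarith
    · have hdk : d = M-1-κ := min_eq_right hc
      have hne : M-1-κ ≠ 0 := by omega
      have hg : gg M (M-1-κ) = (M:ℝ)/(4*((M-1-κ:ℕ):ℝ)^2) := by unfold gg; simp [hne]
      rw [hdk, hg]
      have := gg_nonneg M κ
      linarith
  linarith

lemma ee_sum {m : ℕ} (s : Fin m → ℝ) : ee (∑ v, s v) = ∏ v, ee (s v) := by
  simp only [ee, ← Complex.exp_sum]
  congr 1
  rw [← Finset.mul_sum]
  congr 1
  push_cast
  rfl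

lemma DD_neg (M : ℕ) (t : ℝ) : DD M (-t) = (starRingEnd ℂ) (DD M t) := by
  rw [DD, DD, map_sum]
  refine Finset.sum_congr rfl (fun j _ => ?_)
  rw [ee_conj]
  congr 1
  ring

lemma EE_norm_neg (M : ℕ) (t : ℝ) : ‖EE M (-t)‖ = ‖EE M t‖ := by
  rw [EE_norm, EE_norm, DD_neg, RCLike.norm_conj]

lemma tsum_ball_eq {α : Type*} [AddCommMonoid α] [TopologicalSpace α] [T2Space α] {m : ℕ}
    (P : (Fin m → ℤ) → Prop) (hfin : {n | P n}.Finite) (g : (Fin m → ℤ) → α) :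
    ∑' n : {n : Fin m → ℤ // P n}, g n.1 = ∑ n ∈ hfin.toFinset, g n := by
  rw [show (∑' n : {n : Fin m → ℤ // P n}, g n.1) = ∑' n : {n : Fin m → ℤ | P n}, g n.1 from rfl]
  rw [_root_.tsum_subtype]
  rw [tsum_eq_sum (s := hfin.toFinset)
    (fun b hb => Set.indicator_of_notMem (fun hPb => hb (hfin.mem_toFinset.mpr hPb)) g)]
  exact Finset.sum_congr rfl (fun n hn => Set.indicator_of_mem (hfin.mem_toFinset.mp hn) g)

set_option maxHeartbeats 2000000 in
/-- the large sieve for ℝ^m. If F bounds, for each i, the number of j with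
min_{z ∈ ℤ^m} ‖x_j - x_i - z‖₂ ≤ √m/N^{1/m}, then
Σ_{i=1}^R |Σ_{n ∈ ℤ^m, ‖n‖₂ ≤ N^{1/m}} a_n e(n·x_i)|² ≪_m F·N·Σ_n |a_n|². -/
theorem large_sieve_Rm (m : ℕ) (hm : 1 ≤ m) :
    ∃ C : ℝ, 0 < C ∧ ∀ (R N : ℕ), 2 ≤ N → ∀ (x : Fin R → Fin m → ℝ)
      (a : (Fin m → ℤ) → ℂ) (F : ℕ),
      (∀ i : Fin R,
        (Set.ncard {j : Fin R | ∃ z : Fin m → ℤ,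
          Real.sqrt (∑ v, (x j v - x i v - (z v : ℝ)) ^ 2) ≤
            Real.sqrt m / (N : ℝ) ^ ((1 : ℝ) / m)}) ≤ F) →
      (∑ i : Fin R,
        ‖∑' n : {n : Fin m → ℤ //
              Real.sqrt (∑ v, ((n v : ℝ)) ^ 2) ≤ (N : ℝ) ^ ((1 : ℝ) / m)},
            a n.1 * Complex.exp (2 * (Real.pi : ℂ) * Complex.I *
              ((∑ v, (n.1 v : ℝ) * x i v : ℝ) : ℂ))‖ ^ 2)
      ≤ C * F * N *
        ∑' n : {n : Fin m → ℤ //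
            Real.sqrt (∑ v, ((n v : ℝ)) ^ 2) ≤ (N : ℝ) ^ ((1 : ℝ) / m)}, ‖a n.1‖ ^ 2 := by
  refine ⟨(24:ℝ)^m, by positivity, ?_⟩
  intro R N hN x a F hF
  -- basic parameters
  set T : ℝ := (N:ℝ) ^ ((1:ℝ)/m) with hT
  have hm0 : m ≠ 0 := by omega
  have hN1 : (1:ℝ) ≤ (N:ℝ) := by exact_mod_cast le_trans one_le_two hN
  have hT1 : 1 ≤ T := Real.one_le_rpow hN1 (by positivity)
  have hT0 : (0:ℝ) < T := lt_of_lt_of_le one_pos hT1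
  have hTm : T ^ m = (N:ℝ) := by
    rw [hT, ← Real.rpow_natCast ((N:ℝ) ^ ((1:ℝ)/m)) m, ← Real.rpow_mul (by positivity)]
    rw [show (1:ℝ)/m * m = 1 by field_simp]
    exact Real.rpow_one _
  set L : ℕ := ⌈T⌉₊ with hLdef
  have hL1 : 1 ≤ L := Nat.one_le_ceil_iff.mpr hT0
  have hTL : T ≤ (L:ℝ) := Nat.le_ceil T
  have hL2T : (L:ℝ) ≤ 2*T := by
    have := Nat.ceil_lt_add_one (le_of_lt hT0)
    rw [hLdef]; linarith
  set M : ℕ := 2*L with hMdef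
  have hM1 : 1 ≤ M := by omega
  have hM0 : (0:ℝ) < (M:ℝ) := by exact_mod_cast (by omega : 0 < M)
  have hTM : T ≤ (M:ℝ) := by
    have h1 : (L:ℝ) ≤ (M:ℝ) := by exact_mod_cast (by omega : L ≤ M)
    linarith
  have hM4T : (M:ℝ) ≤ 4*T := by
    have h1 : (M:ℝ) = 2*(L:ℝ) := by rw [hMdef]; push_cast; ring
    linarith
  -- ball finiteness
  have hcoord : ∀ n : Fin m → ℤ, Real.sqrt (∑ v, ((n v : ℝ))^2) ≤ T → ∀ v, |n v| ≤ (L:ℤ) := by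
    intro n hn v
    have h1 : ((n v:ℝ))^2 ≤ ∑ w, ((n w : ℝ))^2 :=
      Finset.single_le_sum (f := fun w => ((n w : ℝ))^2) (fun w _ => sq_nonneg _) (Finset.mem_univ v)
    have h3 : |(n v : ℝ)| ≤ T := by
      rw [← Real.sqrt_sq_eq_abs]
      exact le_trans (Real.sqrt_le_sqrt h1) hn
    have h4 : |(n v : ℝ)| ≤ (L:ℝ) := le_trans h3 hTL
    rw [← Int.cast_abs] at h4
    exact_mod_cast h4
  have hfin : {n : Fin m → ℤ | Real.sqrt (∑ v, ((n v : ℝ))^2) ≤ T}.Finite := by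
    apply Set.Finite.subset (Set.Finite.pi (fun v : Fin m => Set.finite_Icc (-(L:ℤ)) (L:ℤ)))
    intro n hn
    rw [Set.mem_pi]
    intro v _
    rw [Set.mem_Icc]
    have h5 := abs_le.mp (hcoord n hn v)
    omega
  set Bfin : Finset (Fin m → ℤ) := hfin.toFinset with hBdef
  have hmemB : ∀ n, n ∈ Bfin ↔ Real.sqrt (∑ v, ((n v : ℝ))^2) ≤ T :=
    fun n => hfin.mem_toFinset
  -- rewrite goal using finite sums
  set SS : Fin R → ℂ := fun i => ∑ n ∈ Bfin, a n * ee (∑ v, (n v:ℝ) * x i v) with hSS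
  set Q : ℝ := ∑ n ∈ Bfin, ‖a n‖^2 with hQ
  have hgoal1 : ∀ i : Fin R,
      (∑' n : {n : Fin m → ℤ // Real.sqrt (∑ v, ((n v : ℝ))^2) ≤ T},
        a n.1 * Complex.exp (2 * (Real.pi : ℂ) * Complex.I *
          ((∑ v, (n.1 v : ℝ) * x i v : ℝ) : ℂ))) = SS i := fun i =>
    tsum_ball_eq _ hfin (fun n => a n * ee (∑ v, (n v:ℝ) * x i v))
  have hgoal2 : (∑' n : {n : Fin m → ℤ // Real.sqrt (∑ v, ((n v : ℝ))^2) ≤ T}, ‖a n.1‖^2) = Q :=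
    tsum_ball_eq _ hfin (fun n => ‖a n‖^2)
  rw [hgoal2, Finset.sum_congr rfl (fun i _ => by rw [hgoal1 i])]
  -- core objects
  have hQ0 : 0 ≤ Q := Finset.sum_nonneg (fun n _ => sq_nonneg _)
  have hF0 : (0:ℝ) ≤ (F:ℝ) := Nat.cast_nonneg F
  set lhs : ℝ := ∑ i : Fin R, ‖SS i‖^2 with hlhs
  have hlhs0 : 0 ≤ lhs := Finset.sum_nonneg (fun i _ => sq_nonneg _)
  set G : (Fin m → ℤ) → ℂ :=
    fun n => ∑ i : Fin R, (starRingEnd ℂ) (SS i) * ee (∑ v, (n v:ℝ) * x i v) with hG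
  set box : Finset (Fin m → ℤ) :=
    Fintype.piFinset (fun _ : Fin m => Finset.Icc (1-(M:ℤ)) ((M:ℤ)-1)) with hbox
  set W : (Fin m → ℤ) → ℝ := fun n => ∏ v, ww M (n v) with hW
  set Knorm : Fin R → Fin R → ℝ := fun i j => ∏ v, ‖EE M (x i v - x j v)‖ with hKnorm
  have hWnonneg : ∀ n, 0 ≤ W n := fun n => Finset.prod_nonneg (fun v _ => ww_nonneg M (n v))
  have hKnn : ∀ i j, 0 ≤ Knorm i j := fun i j => Finset.prod_nonneg (fun v _ => norm_nonneg _)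
  -- Step A : lhs ≤ ∑ n ∈ Bfin, ‖a n‖ * ‖G n‖
  have stepA : lhs ≤ ∑ n ∈ Bfin, ‖a n‖ * ‖G n‖ := by
    have hA1 : lhs = (∑ i : Fin R, SS i * (starRingEnd ℂ) (SS i)).re := by
      rw [Complex.re_sum, hlhs]
      exact Finset.sum_congr rfl (fun i _ => by
        rw [Complex.mul_conj, Complex.ofReal_re, Complex.normSq_eq_norm_sq])
    have hA2 : (∑ i : Fin R, SS i * (starRingEnd ℂ) (SS i)) = ∑ n ∈ Bfin, a n * G n := by
      calc ∑ i : Fin R, SS i * (starRingEnd ℂ) (SS i)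
          = ∑ i : Fin R, ∑ n ∈ Bfin, a n * ((starRingEnd ℂ) (SS i) * ee (∑ v, (n v:ℝ) * x i v)) := by
            refine Finset.sum_congr rfl (fun i _ => ?_)
            rw [hSS]
            simp only []
            rw [Finset.sum_mul]
            exact Finset.sum_congr rfl (fun n _ => by ring)
        _ = ∑ n ∈ Bfin, ∑ i : Fin R, a n * ((starRingEnd ℂ) (SS i) * ee (∑ v, (n v:ℝ) * x i v)) :=
            Finset.sum_comm
        _ = ∑ n ∈ Bfin, a n * G n := by
            refine Finset.sum_congr rfl (fun n _ => ?_)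
            rw [hG, ← Finset.mul_sum]
    calc lhs = (∑ n ∈ Bfin, a n * G n).re := by rw [hA1, hA2]
      _ ≤ ‖∑ n ∈ Bfin, a n * G n‖ := Complex.re_le_norm _
      _ ≤ ∑ n ∈ Bfin, ‖a n * G n‖ := norm_sum_le _ _
      _ = ∑ n ∈ Bfin, ‖a n‖ * ‖G n‖ := Finset.sum_congr rfl (fun n _ => norm_mul _ _)
  -- Step CS : Cauchy-Schwarz
  have stepCS : (∑ n ∈ Bfin, ‖a n‖ * ‖G n‖)^2 ≤ Q * (∑ n ∈ Bfin, ‖G n‖^2) :=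
    Finset.sum_mul_sq_le_sq_mul_sq Bfin _ _
  -- Step B : enlarge to weighted sum over box
  have hBsub : Bfin ⊆ box := by
    intro n hn
    rw [hmemB] at hn
    rw [hbox, Fintype.mem_piFinset]
    intro v
    rw [Finset.mem_Icc]
    have h5 := abs_le.mp (hcoord n hn v)
    omega
  have hWhalf : ∀ n ∈ Bfin, (1:ℝ) ≤ 2^m * W n := by
    intro n hn
    rw [hmemB] at hn
    have h2 : (2:ℝ)^m * W n = ∏ v : Fin m, (2 * ww M (n v)) := by
      rw [Finset.prod_mul_distrib, Finset.prod_const, Finset.card_univ, Fintype.card_fin, hW]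
    rw [h2]
    calc (1:ℝ) = ∏ _v : Fin m, 1 := by rw [Finset.prod_const, one_pow]
      _ ≤ ∏ v : Fin m, (2 * ww M (n v)) := by
        apply Finset.prod_le_prod (fun v _ => zero_le_one)
        intro v _
        have h7 := ww_ge_half L hL1 (k := n v) (hcoord n hn v)
        rw [hMdef]
        linarith
  have stepB : (∑ n ∈ Bfin, ‖G n‖^2) ≤ 2^m * ∑ n ∈ box, W n * ‖G n‖^2 := by
    calc ∑ n ∈ Bfin, ‖G n‖^2 ≤ ∑ n ∈ Bfin, 2^m * (W n * ‖G n‖^2) := by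
          refine Finset.sum_le_sum (fun n hn => ?_)
          have h1 := hWhalf n hn
          have h2 : 0 ≤ ‖G n‖^2 := sq_nonneg _
          nlinarith
      _ = 2^m * ∑ n ∈ Bfin, W n * ‖G n‖^2 := by rw [← Finset.mul_sum]
      _ ≤ 2^m * ∑ n ∈ box, W n * ‖G n‖^2 := by
          have h3 : (0:ℝ) ≤ 2^m := by positivity
          apply mul_le_mul_of_nonneg_left _ h3
          exact Finset.sum_le_sum_of_subset_of_nonneg hBsub
            (fun n _ _ => mul_nonneg (hWnonneg n) (sq_nonneg _))
  -- Step C : expansion of the weighted sum as a bilinear form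
  have stepC : (∑ n ∈ box, W n * ‖G n‖^2)
      ≤ ∑ i : Fin R, ∑ j : Fin R, ‖SS i‖ * ‖SS j‖ * Knorm i j := by
    have hCexp : ∑ n ∈ box, (W n : ℂ) * (G n * (starRingEnd ℂ) (G n))
        = ∑ i : Fin R, ∑ j : Fin R, ((starRingEnd ℂ) (SS i) * SS j) *
            ∑ n ∈ box, (W n : ℂ) * ee (∑ v, (n v:ℝ) * (x i v - x j v)) := by
      have h1 : ∀ n, G n * (starRingEnd ℂ) (G n)
          = ∑ i : Fin R, ∑ j : Fin R, ((starRingEnd ℂ) (SS i) * SS j) *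
              ee (∑ v, (n v:ℝ) * (x i v - x j v)) := by
        intro n
        rw [hG]
        simp only []
        rw [map_sum, Finset.sum_mul_sum]
        refine Finset.sum_congr rfl (fun i _ => Finset.sum_congr rfl (fun j _ => ?_))
        rw [map_mul, Complex.conj_conj, ee_conj]
        have he : ee (∑ v, (n v:ℝ) * x i v) * ee (-(∑ v, (n v:ℝ) * x j v))
            = ee (∑ v, (n v:ℝ) * (x i v - x j v)) := by
          rw [← ee_add]
          congr 1
          rw [← Finset.sum_neg_distrib, ← Finset.sum_add_distrib]
          exact Finset.sum_congr rfl (fun v _ => by ring)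
        rw [← he]
        ring
      calc ∑ n ∈ box, (W n : ℂ) * (G n * (starRingEnd ℂ) (G n))
          = ∑ n ∈ box, ∑ i : Fin R, ∑ j : Fin R, ((starRingEnd ℂ) (SS i) * SS j) *
              ((W n : ℂ) * ee (∑ v, (n v:ℝ) * (x i v - x j v))) := by
            refine Finset.sum_congr rfl (fun n _ => ?_)
            rw [h1 n, Finset.mul_sum]
            refine Finset.sum_congr rfl (fun i _ => ?_)
            rw [Finset.mul_sum]
            exact Finset.sum_congr rfl (fun j _ => by ring)
        _ = ∑ i : Fin R, ∑ j : Fin R, ∑ n ∈ box, ((starRingEnd ℂ) (SS i) * SS j) *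
              ((W n : ℂ) * ee (∑ v, (n v:ℝ) * (x i v - x j v))) := by
            rw [Finset.sum_comm]
            exact Finset.sum_congr rfl (fun i _ => Finset.sum_comm)
        _ = ∑ i : Fin R, ∑ j : Fin R, ((starRingEnd ℂ) (SS i) * SS j) *
              ∑ n ∈ box, (W n : ℂ) * ee (∑ v, (n v:ℝ) * (x i v - x j v)) := by
            exact Finset.sum_congr rfl (fun i _ => Finset.sum_congr rfl (fun j _ => by
              rw [← Finset.mul_sum]))
    have hCre : (∑ n ∈ box, W n * ‖G n‖^2)
        = (∑ n ∈ box, (W n : ℂ) * (G n * (starRingEnd ℂ) (G n))).re := by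
      rw [Complex.re_sum]
      refine Finset.sum_congr rfl (fun n _ => ?_)
      rw [Complex.mul_conj, ← Complex.ofReal_mul, Complex.ofReal_re, Complex.normSq_eq_norm_sq]
    -- kernel factorization
    have hKfac : ∀ i j : Fin R,
        (∑ n ∈ box, (W n : ℂ) * ee (∑ v, (n v:ℝ) * (x i v - x j v)))
          = ∏ v, EE M (x i v - x j v) := by
      intro i j
      have h2 : ∀ n ∈ box, (W n : ℂ) * ee (∑ v, (n v:ℝ) * (x i v - x j v))
          = ∏ v, ((ww M (n v) : ℂ) * ee ((n v : ℝ) * (x i v - x j v))) := by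
        intro n _
        rw [Finset.prod_mul_distrib, ee_sum (fun v => (n v:ℝ) * (x i v - x j v))]
        congr 1
        rw [hW]
        push_cast
        rfl
      rw [Finset.sum_congr rfl h2, hbox]
      exact ((Finset.prod_univ_sum (fun _ : Fin m => Finset.Icc (1-(M:ℤ)) ((M:ℤ)-1))
        (fun v k => ((ww M k : ℝ):ℂ) * ee ((k:ℝ) * (x i v - x j v)))).symm).trans
        (Finset.prod_congr rfl (fun v _ => rfl))
    calc (∑ n ∈ box, W n * ‖G n‖^2)
        = (∑ i : Fin R, ∑ j : Fin R, ((starRingEnd ℂ) (SS i) * SS j) *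
            ∏ v, EE M (x i v - x j v)).re := by
          rw [hCre, hCexp]
          congr 1
          exact Finset.sum_congr rfl (fun i _ => Finset.sum_congr rfl (fun j _ => by
            rw [hKfac i j]))
      _ ≤ ‖∑ i : Fin R, ∑ j : Fin R, ((starRingEnd ℂ) (SS i) * SS j) *
            ∏ v, EE M (x i v - x j v)‖ := Complex.re_le_norm _
      _ ≤ ∑ i : Fin R, ‖∑ j : Fin R, ((starRingEnd ℂ) (SS i) * SS j) *
            ∏ v, EE M (x i v - x j v)‖ := norm_sum_le _ _
      _ ≤ ∑ i : Fin R, ∑ j : Fin R, ‖((starRingEnd ℂ) (SS i) * SS j) *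
            ∏ v, EE M (x i v - x j v)‖ :=
          Finset.sum_le_sum (fun i _ => norm_sum_le _ _)
      _ = ∑ i : Fin R, ∑ j : Fin R, ‖SS i‖ * ‖SS j‖ * Knorm i j := by
          refine Finset.sum_congr rfl (fun i _ => Finset.sum_congr rfl (fun j _ => ?_))
          rw [norm_mul, norm_mul, RCLike.norm_conj, hKnorm]
          congr 1
          exact norm_prod _ _
  -- Step E : kernel row sums
  have hrow : ∀ i : Fin R, (∑ j : Fin R, Knorm i j) ≤ (F:ℝ) * (3*(M:ℝ))^m := by
    intro i
    set κ : Fin R → (Fin m → ℕ) := fun j v => ⌊(M:ℝ) * Int.fract (x i v - x j v)⌋₊ with hκ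
    have hfr0 : ∀ j v, (0:ℝ) ≤ (M:ℝ) * Int.fract (x i v - x j v) :=
      fun j v => mul_nonneg hM0.le (Int.fract_nonneg _)
    have hκlt : ∀ j v, κ j v < M := by
      intro j v
      rw [hκ]
      apply (Nat.floor_lt (hfr0 j v)).mpr
      calc (M:ℝ) * Int.fract (x i v - x j v) < (M:ℝ) * 1 :=
            mul_lt_mul_of_pos_left (Int.fract_lt_one _) hM0
        _ = M := mul_one _
    have hκmem : ∀ j ∈ Finset.univ, κ j ∈ Fintype.piFinset (fun _ : Fin m => Finset.range M) := by
      intro j _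
      rw [Fintype.mem_piFinset]
      intro v
      rw [Finset.mem_range]
      exact hκlt j v
    have hcell1 : ∀ j v, ((κ j v:ℝ))/M ≤ Int.fract (x i v - x j v) := by
      intro j v
      rw [div_le_iff₀ hM0]
      calc ((κ j v:ℝ)) ≤ (M:ℝ) * Int.fract (x i v - x j v) := Nat.floor_le (hfr0 j v)
        _ = Int.fract (x i v - x j v) * M := mul_comm _ _
    have hcell2 : ∀ j v, Int.fract (x i v - x j v) < ((κ j v:ℝ)+1)/M := by
      intro j v
      rw [lt_div_iff₀ hM0]
      calc Int.fract (x i v - x j v) * M = (M:ℝ) * Int.fract (x i v - x j v) := mul_comm _ _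
        _ < (κ j v:ℝ) + 1 := Nat.lt_floor_add_one _
    have hjb : ∀ j, Knorm i j ≤ ∏ v, (gg M (κ j v) + gg M (M-1-κ j v)) := by
      intro j
      rw [hKnorm]
      apply Finset.prod_le_prod (fun v _ => norm_nonneg _)
      intro v _
      exact cell_bound M hM1 _ (κ j v) (hκlt j v) (hcell1 j v) (hcell2 j v)
    have hβ0 : ∀ κ0 : Fin m → ℕ, (0:ℝ) ≤ ∏ v, (gg M (κ0 v) + gg M (M-1-κ0 v)) :=
      fun κ0 => Finset.prod_nonneg (fun v _ => add_nonneg (gg_nonneg _ _) (gg_nonneg _ _))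
    rw [← Finset.sum_fiberwise_of_maps_to hκmem (fun j => Knorm i j)]
    have hfiber : ∀ κ0 ∈ Fintype.piFinset (fun _ : Fin m => Finset.range M),
        (∑ j ∈ Finset.univ.filter (fun j => κ j = κ0), Knorm i j)
          ≤ (F:ℝ) * ∏ v, (gg M (κ0 v) + gg M (M-1-κ0 v)) := by
      intro κ0 _
      set s := Finset.univ.filter (fun j => κ j = κ0) with hs
      have hsum1 : (∑ j ∈ s, Knorm i j) ≤ (s.card : ℝ) * ∏ v, (gg M (κ0 v) + gg M (M-1-κ0 v)) := by
        rw [← nsmul_eq_mul]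
        apply Finset.sum_le_card_nsmul
        intro j hj
        have hjκ : κ j = κ0 := (Finset.mem_filter.mp hj).2
        calc Knorm i j ≤ ∏ v, (gg M (κ j v) + gg M (M-1-κ j v)) := hjb j
          _ = ∏ v, (gg M (κ0 v) + gg M (M-1-κ0 v)) := by rw [hjκ]
      rcases s.eq_empty_or_nonempty with he | hne
      · rw [he]
        simp only [Finset.sum_empty]
        exact mul_nonneg hF0 (hβ0 κ0)
      obtain ⟨j0, hj0⟩ := hne
      have hcard : (s.card : ℝ) ≤ (F:ℝ) := by
        have hsub2 : (↑s : Set (Fin R)) ⊆ {j : Fin R | ∃ z : Fin m → ℤ,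
            Real.sqrt (∑ v, (x j v - x j0 v - (z v : ℝ)) ^ 2) ≤ Real.sqrt m / T} := by
          intro j hj
          have hjκ : κ j = κ0 := (Finset.mem_filter.mp (hj : j ∈ s)).2
          have hj0κ : κ j0 = κ0 := (Finset.mem_filter.mp hj0).2
          refine ⟨fun v => ⌊x i v - x j0 v⌋ - ⌊x i v - x j v⌋, ?_⟩
          have key : ∀ v, (x j v - x j0 v - ((⌊x i v - x j0 v⌋ - ⌊x i v - x j v⌋ : ℤ):ℝ))^2
              ≤ (1/(M:ℝ))^2 := by
            intro v
            have e1 : x j v - x j0 v - ((⌊x i v - x j0 v⌋ - ⌊x i v - x j v⌋ : ℤ):ℝ)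
                = Int.fract (x i v - x j0 v) - Int.fract (x i v - x j v) := by
              rw [Int.fract, Int.fract]
              push_cast
              ring
            rw [e1]
            have b1 := hcell1 j v
            have b2 := hcell2 j v
            have b3 := hcell1 j0 v
            have b4 := hcell2 j0 v
            rw [hjκ] at b1 b2
            rw [hj0κ] at b3 b4
            have habs : |Int.fract (x i v - x j0 v) - Int.fract (x i v - x j v)| ≤ 1/(M:ℝ) := by
              rw [abs_le]
              constructor
              · have haux : ((κ0 v:ℝ))/M - ((κ0 v:ℝ)+1)/M = -(1/(M:ℝ)) := by ring
                nlinarith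
              · have haux : ((κ0 v:ℝ)+1)/M - ((κ0 v:ℝ))/M = 1/(M:ℝ) := by ring
                nlinarith
            rw [← _root_.sq_abs]
            exact pow_le_pow_left₀ (abs_nonneg _) habs 2
          have hsumsq : (∑ v, (x j v - x j0 v - (((fun v => ⌊x i v - x j0 v⌋ - ⌊x i v - x j v⌋) v : ℤ):ℝ))^2)
              ≤ (m:ℝ) * (1/(M:ℝ))^2 := by
            calc (∑ v, (x j v - x j0 v - ((⌊x i v - x j0 v⌋ - ⌊x i v - x j v⌋ : ℤ):ℝ))^2)
                ≤ ∑ _v : Fin m, (1/(M:ℝ))^2 := Finset.sum_le_sum (fun v _ => key v)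
              _ = (m:ℝ) * (1/(M:ℝ))^2 := by rw [Finset.sum_const, Finset.card_univ, Fintype.card_fin, nsmul_eq_mul]
          calc Real.sqrt (∑ v, (x j v - x j0 v - (((fun v => ⌊x i v - x j0 v⌋ - ⌊x i v - x j v⌋) v : ℤ):ℝ))^2)
              ≤ Real.sqrt ((m:ℝ) * (1/(M:ℝ))^2) := Real.sqrt_le_sqrt hsumsq
            _ = Real.sqrt m * (1/(M:ℝ)) := by
                rw [Real.sqrt_mul (Nat.cast_nonneg m), Real.sqrt_sq (by positivity)]
            _ = Real.sqrt m / (M:ℝ) := by ring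
            _ ≤ Real.sqrt m / T := by
                apply div_le_div_of_nonneg_left (Real.sqrt_nonneg _) hT0 hTM
        have h5 : s.card ≤ F := by
          calc s.card = (↑s : Set (Fin R)).ncard := (Set.ncard_coe_finset s).symm
            _ ≤ Set.ncard {j : Fin R | ∃ z : Fin m → ℤ,
                Real.sqrt (∑ v, (x j v - x j0 v - (z v : ℝ)) ^ 2) ≤ Real.sqrt m / T} :=
              Set.ncard_le_ncard hsub2 (Set.toFinite _)
            _ ≤ F := hF j0
        exact_mod_cast h5
      calc (∑ j ∈ s, Knorm i j) ≤ (s.card : ℝ) * ∏ v, (gg M (κ0 v) + gg M (M-1-κ0 v)) := hsum1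
        _ ≤ (F:ℝ) * ∏ v, (gg M (κ0 v) + gg M (M-1-κ0 v)) :=
          mul_le_mul_of_nonneg_right hcard (hβ0 κ0)
    calc ∑ κ0 ∈ Fintype.piFinset (fun _ : Fin m => Finset.range M),
          ∑ j ∈ Finset.univ.filter (fun j => κ j = κ0), Knorm i j
        ≤ ∑ κ0 ∈ Fintype.piFinset (fun _ : Fin m => Finset.range M),
            (F:ℝ) * ∏ v, (gg M (κ0 v) + gg M (M-1-κ0 v)) := Finset.sum_le_sum hfiber
      _ = (F:ℝ) * ∑ κ0 ∈ Fintype.piFinset (fun _ : Fin m => Finset.range M),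
            ∏ v, (gg M (κ0 v) + gg M (M-1-κ0 v)) := by rw [← Finset.mul_sum]
      _ = (F:ℝ) * ∏ v : Fin m, ∑ κ0 ∈ Finset.range M, (gg M κ0 + gg M (M-1-κ0)) := by
          congr 1
          exact (Finset.prod_univ_sum (fun _ : Fin m => Finset.range M)
            (fun v κ0 => gg M κ0 + gg M (M-1-κ0))).symm
      _ ≤ (F:ℝ) * (3*(M:ℝ))^m := by
          apply mul_le_mul_of_nonneg_left _ hF0
          have hfac : ∀ v : Fin m, (∑ κ0 ∈ Finset.range M, (gg M κ0 + gg M (M-1-κ0))) ≤ 3*(M:ℝ) := by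
            intro v
            rw [Finset.sum_add_distrib]
            have h6 : ∑ κ0 ∈ Finset.range M, gg M (M-1-κ0) = ∑ κ0 ∈ Finset.range M, gg M κ0 :=
              Finset.sum_range_reflect (gg M) M
            rw [h6]
            have := gg_sum M hM1
            linarith
          calc ∏ v : Fin m, ∑ κ0 ∈ Finset.range M, (gg M κ0 + gg M (M-1-κ0))
              ≤ ∏ _v : Fin m, 3*(M:ℝ) := by
                apply Finset.prod_le_prod
                · intro v _
                  exact Finset.sum_nonneg (fun κ0 _ => add_nonneg (gg_nonneg _ _) (gg_nonneg _ _))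
                · intro v _
                  exact hfac v
            _ = (3*(M:ℝ))^m := by rw [Finset.prod_const, Finset.card_univ, Fintype.card_fin]
  -- Step F : symmetry of the kernel
  have hKsymm : ∀ i j : Fin R, Knorm i j = Knorm j i := by
    intro i j
    rw [hKnorm]
    refine Finset.prod_congr rfl (fun v _ => ?_)
    rw [show x i v - x j v = -(x j v - x i v) by ring, EE_norm_neg]
  -- Step G : bilinear bound
  have stepG : (∑ i : Fin R, ∑ j : Fin R, ‖SS i‖ * ‖SS j‖ * Knorm i j)
      ≤ ((F:ℝ) * (3*(M:ℝ))^m) * lhs := by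
    have hAM : ∀ i j : Fin R, ‖SS i‖ * ‖SS j‖ * Knorm i j
        ≤ (‖SS i‖^2 * Knorm i j + ‖SS j‖^2 * Knorm i j) / 2 := by
      intro i j
      have h1 := hKnn i j
      nlinarith [sq_nonneg (‖SS i‖ - ‖SS j‖)]
    have hhalf1 : (∑ i : Fin R, ∑ j : Fin R, ‖SS i‖^2 * Knorm i j)
        ≤ ((F:ℝ) * (3*(M:ℝ))^m) * lhs := by
      calc ∑ i : Fin R, ∑ j : Fin R, ‖SS i‖^2 * Knorm i j
          = ∑ i : Fin R, ‖SS i‖^2 * ∑ j : Fin R, Knorm i j := by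
            exact Finset.sum_congr rfl (fun i _ => by rw [← Finset.mul_sum])
        _ ≤ ∑ i : Fin R, ‖SS i‖^2 * ((F:ℝ) * (3*(M:ℝ))^m) :=
            Finset.sum_le_sum (fun i _ => mul_le_mul_of_nonneg_left (hrow i) (sq_nonneg _))
        _ = ((F:ℝ) * (3*(M:ℝ))^m) * lhs := by
            rw [hlhs, Finset.mul_sum]
            exact Finset.sum_congr rfl (fun i _ => mul_comm _ _)
    have hhalf2 : (∑ i : Fin R, ∑ j : Fin R, ‖SS j‖^2 * Knorm i j)
        ≤ ((F:ℝ) * (3*(M:ℝ))^m) * lhs := by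
      calc ∑ i : Fin R, ∑ j : Fin R, ‖SS j‖^2 * Knorm i j
          = ∑ j : Fin R, ∑ i : Fin R, ‖SS j‖^2 * Knorm i j := Finset.sum_comm
        _ = ∑ j : Fin R, ∑ i : Fin R, ‖SS j‖^2 * Knorm j i := by
            exact Finset.sum_congr rfl (fun j _ => Finset.sum_congr rfl (fun i _ => by
              rw [hKsymm i j]))
        _ ≤ ((F:ℝ) * (3*(M:ℝ))^m) * lhs := by
            calc ∑ j : Fin R, ∑ i : Fin R, ‖SS j‖^2 * Knorm j i
                = ∑ j : Fin R, ‖SS j‖^2 * ∑ i : Fin R, Knorm j i := by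
                  exact Finset.sum_congr rfl (fun j _ => by rw [← Finset.mul_sum])
              _ ≤ ∑ j : Fin R, ‖SS j‖^2 * ((F:ℝ) * (3*(M:ℝ))^m) :=
                  Finset.sum_le_sum (fun j _ => mul_le_mul_of_nonneg_left (hrow j) (sq_nonneg _))
              _ = ((F:ℝ) * (3*(M:ℝ))^m) * lhs := by
                  rw [hlhs, Finset.mul_sum]
                  exact Finset.sum_congr rfl (fun j _ => mul_comm _ _)
    calc ∑ i : Fin R, ∑ j : Fin R, ‖SS i‖ * ‖SS j‖ * Knorm i j
        ≤ ∑ i : Fin R, ∑ j : Fin R, (‖SS i‖^2 * Knorm i j + ‖SS j‖^2 * Knorm i j) / 2 :=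
          Finset.sum_le_sum (fun i _ => Finset.sum_le_sum (fun j _ => hAM i j))
      _ = ((∑ i : Fin R, ∑ j : Fin R, ‖SS i‖^2 * Knorm i j)
            + ∑ i : Fin R, ∑ j : Fin R, ‖SS j‖^2 * Knorm i j) / 2 := by
          rw [← Finset.sum_add_distrib]
          rw [Finset.sum_div]
          refine Finset.sum_congr rfl (fun i _ => ?_)
          rw [← Finset.sum_add_distrib, Finset.sum_div]
      _ ≤ ((F:ℝ) * (3*(M:ℝ))^m) * lhs := by linarith
  -- assemble
  have hA : (0:ℝ) ≤ (F:ℝ) * (3*(M:ℝ))^m := by positivity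
  have hmain : lhs^2 ≤ (Q * (2^m * ((F:ℝ) * (3*(M:ℝ))^m))) * lhs := by
    have h1 : lhs^2 ≤ Q * (∑ n ∈ Bfin, ‖G n‖^2) := by
      calc lhs^2 ≤ (∑ n ∈ Bfin, ‖a n‖ * ‖G n‖)^2 := by
            apply pow_le_pow_left₀ hlhs0 stepA
        _ ≤ Q * (∑ n ∈ Bfin, ‖G n‖^2) := stepCS
    have h2 : (∑ n ∈ Bfin, ‖G n‖^2) ≤ 2^m * (((F:ℝ) * (3*(M:ℝ))^m) * lhs) := by
      calc (∑ n ∈ Bfin, ‖G n‖^2) ≤ 2^m * ∑ n ∈ box, W n * ‖G n‖^2 := stepB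
        _ ≤ 2^m * (((F:ℝ) * (3*(M:ℝ))^m) * lhs) := by
            apply mul_le_mul_of_nonneg_left _ (by positivity : (0:ℝ) ≤ 2^m)
            exact le_trans stepC stepG
    calc lhs^2 ≤ Q * (∑ n ∈ Bfin, ‖G n‖^2) := h1
      _ ≤ Q * (2^m * (((F:ℝ) * (3*(M:ℝ))^m) * lhs)) := mul_le_mul_of_nonneg_left h2 hQ0
      _ = (Q * (2^m * ((F:ℝ) * (3*(M:ℝ))^m))) * lhs := by ring
  have hfinal : lhs ≤ Q * (2^m * ((F:ℝ) * (3*(M:ℝ))^m)) := by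
    rcases eq_or_lt_of_le hlhs0 with h0 | h0
    · rw [← h0]
      positivity
    · have := hmain
      rw [pow_two] at this
      exact le_of_mul_le_mul_right this h0
  -- final constant chase
  have hbound : Q * (2^m * ((F:ℝ) * (3*(M:ℝ))^m)) ≤ (24:ℝ)^m * F * N * Q := by
    have h1 : (3*(M:ℝ))^m ≤ (12*T)^m := by
      apply pow_le_pow_left₀ (by positivity)
      linarith
    have h2 : (12*T)^m = 12^m * (N:ℝ) := by
      rw [mul_pow, hTm]
    have h3 : (2:ℝ)^m * 12^m = 24^m := by
      rw [← mul_pow]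
      norm_num
    have h4 : 2^m * ((F:ℝ) * (3*(M:ℝ))^m) ≤ (24:ℝ)^m * F * N := by
      calc (2:ℝ)^m * ((F:ℝ) * (3*(M:ℝ))^m) ≤ 2^m * ((F:ℝ) * (12*T)^m) := by
            apply mul_le_mul_of_nonneg_left _ (by positivity : (0:ℝ) ≤ 2^m)
            exact mul_le_mul_of_nonneg_left h1 hF0
        _ = (2^m * 12^m) * F * N := by rw [h2]; ring
        _ = (24:ℝ)^m * F * N := by rw [h3]
    calc Q * (2^m * ((F:ℝ) * (3*(M:ℝ))^m)) ≤ Q * ((24:ℝ)^m * F * N) :=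
          mul_le_mul_of_nonneg_left h4 hQ0
      _ = (24:ℝ)^m * F * N * Q := by ring
  exact le_trans hfinal hbound
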